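/- There exists Δ₀ such that for every finite simple graph G = (V,E) with maximum degree Δ ≥ Δ₀ and minimum degree δ ≥ 10^{20}·ln Δ, there exists a subset U ⊆ V such that for every vertex v ∈ V one has |d_U(v) − 10^{-4}·d(v)| ≤ 10^{-6}·d(v). -/

import Mathlib

open Finset

namespace LLLwork

variable {V : Type} [Fintype V] [DecidableEq V]

noncomputable def pw (p : ℝ) (C A : Finset V) : ℝ := p ^ A.card * (1-p) ^ (C \ A).card

noncomputable def w (p : ℝ) (A : Finset V) : ℝ := pw p Finset.univ A

open Classical in
noncomputable def Pr (p : ℝ) (E : Finset V → Prop) : ℝ :=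
  ∑ U : Finset V, if E U then w p U else 0

omit [Fintype V] in
lemma sum_pow_gen (x y : ℝ) (C : Finset V) :
    ∑ T ∈ C.powerset, x ^ T.card * y ^ (C \ T).card = (x + y) ^ C.card := by
  rw [← Finset.prod_const (b := x + y), Finset.prod_add]
  exact Finset.sum_congr rfl (fun T hT => by rw [Finset.prod_const, Finset.prod_const])

omit [Fintype V] in
lemma sum_pw (p : ℝ) (C : Finset V) : ∑ T ∈ C.powerset, pw p C T = 1 := by
  have := sum_pow_gen p (1-p) C
  simpa [pw] using this

omit [Fintype V] in
lemma pw_nonneg {p : ℝ} (hp0 : 0 ≤ p) (hp1 : p ≤ 1) (C A : Finset V) : 0 ≤ pw p C A :=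
  mul_nonneg (pow_nonneg hp0 _) (pow_nonneg (by linarith) _)

lemma w_nonneg {p : ℝ} (hp0 : 0 ≤ p) (hp1 : p ≤ 1) (A : Finset V) : 0 ≤ w p A :=
  pw_nonneg hp0 hp1 _ _

lemma union_eq_left_of_mem_powersets {C : Finset V} {x : Finset V × Finset V}
    (h1 : x.1 ⊆ C) (h2 : x.2 ⊆ Finset.univ \ C) :
    (x.1 ∪ x.2) ∩ C = x.1 ∧ (x.1 ∪ x.2) \ C = x.2 := by
  have hd : Disjoint x.2 C := by
    rw [Finset.disjoint_left]; intro a ha hc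
    exact (Finset.mem_sdiff.mp (h2 ha)).2 hc
  constructor
  · rw [Finset.union_inter_distrib_right, Finset.inter_eq_left.mpr h1,
      Finset.disjoint_iff_inter_eq_empty.mp hd, Finset.union_empty]
  · rw [Finset.union_sdiff_distrib, Finset.sdiff_eq_empty_iff_subset.mpr h1,
      Finset.sdiff_eq_self_of_disjoint hd, Finset.empty_union]

/-- splitting the sum over all subsets along a coordinate set C -/
lemma sum_split (C : Finset V) (F : Finset V → ℝ) :
    ∑ U : Finset V, F U =
      ∑ A ∈ C.powerset, ∑ B ∈ (Finset.univ \ C).powerset, F (A ∪ B) := by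
  rw [← Finset.sum_product']
  apply Finset.sum_bij' (fun U _ => (U ∩ C, U \ C)) (fun x _ => x.1 ∪ x.2)
  · intro U _
    simp only [Finset.mem_product, Finset.mem_powerset]
    refine ⟨Finset.inter_subset_right, fun a ha => ?_⟩
    simp only [Finset.mem_sdiff, Finset.mem_univ, true_and]
    exact (Finset.mem_sdiff.mp ha).2
  · intro x hx; exact Finset.mem_univ _
  · intro U _
    exact sup_inf_sdiff U C
  · intro x hx
    simp only [Finset.mem_product, Finset.mem_powerset] at hx
    have := union_eq_left_of_mem_powersets hx.1 hx.2
    exact Prod.ext this.1 this.2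
  · intro U _
    exact congrArg F (sup_inf_sdiff U C).symm

/-- factorization of weights -/
lemma w_factor {C : Finset V} {A B : Finset V}
    (h1 : A ⊆ C) (h2 : B ⊆ Finset.univ \ C) (p : ℝ) :
    w p (A ∪ B) = pw p C A * pw p (Finset.univ \ C) B := by
  have hdAB : Disjoint A B := by
    rw [Finset.disjoint_left]; intro a ha hb
    exact (Finset.mem_sdiff.mp (h2 hb)).2 (h1 ha)
  have hcard : (A ∪ B).card = A.card + B.card := Finset.card_union_of_disjoint hdAB
  have hsd : Finset.univ \ (A ∪ B) = (C \ A) ∪ ((Finset.univ \ C) \ B) := by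
    ext a
    have hA : a ∈ A → a ∈ C := fun h => h1 h
    have hB : a ∈ B → a ∉ C := fun h => (Finset.mem_sdiff.mp (h2 h)).2
    simp only [Finset.mem_sdiff, Finset.mem_union, Finset.mem_univ, true_and]
    tauto
  have hdsd : Disjoint (C \ A) ((Finset.univ \ C) \ B) := by
    rw [Finset.disjoint_left]; intro a ha hb
    exact (Finset.mem_sdiff.mp (Finset.mem_sdiff.mp hb).1).2 (Finset.mem_sdiff.mp ha).1
  have hcard2 : (Finset.univ \ (A ∪ B)).card = (C \ A).card + ((Finset.univ \ C) \ B).card := by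
    rw [hsd]; exact Finset.card_union_of_disjoint hdsd
  simp only [w, pw, hcard, hcard2, pow_add]
  ring


/-- `E` is determined by the coordinates in `C`. -/
def Det (E : Finset V → Prop) (C : Finset V) : Prop := ∀ U : Finset V, E U ↔ E (U ∩ C)

omit [Fintype V] in
lemma Det.mono {E : Finset V → Prop} {C C' : Finset V} (h : Det E C) (hCC : C ⊆ C') :
    Det E C' := by
  intro U
  rw [h U, h (U ∩ C')]
  rw [Finset.inter_assoc, Finset.inter_eq_right.mpr hCC]

lemma Pr_nonneg {p : ℝ} (hp0 : 0 ≤ p) (hp1 : p ≤ 1) (E : Finset V → Prop) : 0 ≤ Pr p E := by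
  apply Finset.sum_nonneg
  intro U _
  split
  · exact w_nonneg hp0 hp1 U
  · exact le_refl _

lemma Pr_mono {p : ℝ} (hp0 : 0 ≤ p) (hp1 : p ≤ 1) {E F : Finset V → Prop}
    (h : ∀ U, E U → F U) : Pr p E ≤ Pr p F := by
  apply Finset.sum_le_sum
  intro U _
  by_cases hE : E U
  · rw [if_pos hE, if_pos (h U hE)]
  · rw [if_neg hE]
    split
    · exact w_nonneg hp0 hp1 U
    · exact le_refl _

lemma Pr_true (p : ℝ) : Pr (V := V) p (fun _ => True) = 1 := by
  classical
  have : Pr (V := V) p (fun _ => True) = ∑ U : Finset V, w p U := by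
    unfold Pr; simp
  rw [this, ← sum_pw p (Finset.univ : Finset V), Finset.powerset_univ]
  rfl

/-- split: Pr E = Pr (E ∧ F) + Pr (E ∧ ¬ F) -/
lemma Pr_split (p : ℝ) (E F : Finset V → Prop) :
    Pr p E = Pr p (fun U => E U ∧ F U) + Pr p (fun U => E U ∧ ¬ F U) := by
  unfold Pr
  rw [← Finset.sum_add_distrib]
  apply Finset.sum_congr rfl
  intro U _
  by_cases hE : E U <;> by_cases hF : F U <;> simp [hE, hF]

open Classical in
/-- independence of events determined by disjoint coordinate sets -/
lemma Pr_indep {p : ℝ} {E F : Finset V → Prop} {C D : Finset V}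
    (hE : Det E C) (hF : Det F D) (hCD : Disjoint C D) :
    Pr p (fun U => E U ∧ F U) = Pr p E * Pr p F := by
  have key : ∀ (A B : Finset V), A ⊆ C → B ⊆ Finset.univ \ C →
      (E (A ∪ B) ↔ E A) ∧ (F (A ∪ B) ↔ F B) := by
    intro A B hA hB
    have h1 : (A ∪ B) ∩ C = A := by
      simpa using (union_eq_left_of_mem_powersets (x := (A, B)) hA hB).1
    constructor
    · rw [hE (A ∪ B), h1]
    · have hDC : D ⊆ Finset.univ \ C := by
        intro a ha
        simp only [Finset.mem_sdiff, Finset.mem_univ, true_and]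
        exact fun hc => (Finset.disjoint_left.mp hCD) hc ha
      have : (A ∪ B) ∩ D = B ∩ D := by
        rw [Finset.union_inter_distrib_right]
        have : A ∩ D = ∅ := by
          apply Finset.eq_empty_of_forall_notMem
          intro a ha
          have := Finset.mem_inter.mp ha
          exact (Finset.disjoint_left.mp hCD) (hA this.1) this.2
        rw [this, Finset.empty_union]
      rw [hF (A ∪ B), this, ← hF B]
  have expand : ∀ (G : Finset V → Prop),
      Pr p G = ∑ A ∈ C.powerset, ∑ B ∈ (Finset.univ \ C).powerset,
        (if G (A ∪ B) then w p (A ∪ B) else 0) := by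
    intro G
    unfold Pr
    exact sum_split C _
  have wfac : ∀ A ∈ C.powerset, ∀ B ∈ (Finset.univ \ C).powerset,
      w p (A ∪ B) = pw p C A * pw p (Finset.univ \ C) B := by
    intro A hA B hB
    exact w_factor (Finset.mem_powerset.mp hA) (Finset.mem_powerset.mp hB) p
  have lhs_eq : ∑ A ∈ C.powerset, ∑ B ∈ (Finset.univ \ C).powerset,
        (if E (A ∪ B) ∧ F (A ∪ B) then w p (A ∪ B) else 0)
      = (∑ A ∈ C.powerset, (if E A then pw p C A else 0)) *
        (∑ B ∈ (Finset.univ \ C).powerset, (if F B then pw p (Finset.univ \ C) B else 0)) := by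
    rw [Finset.sum_mul_sum]
    apply Finset.sum_congr rfl
    intro A hA
    apply Finset.sum_congr rfl
    intro B hB
    have hk := key A B (Finset.mem_powerset.mp hA) (Finset.mem_powerset.mp hB)
    rw [wfac A hA B hB]
    by_cases hEA : E A <;> by_cases hFB : F B <;>
      simp [hk.1, hk.2, hEA, hFB]
  have E_eq : ∑ A ∈ C.powerset, ∑ B ∈ (Finset.univ \ C).powerset,
        (if E (A ∪ B) then w p (A ∪ B) else 0)
      = ∑ A ∈ C.powerset, (if E A then pw p C A else 0) := by
    apply Finset.sum_congr rfl
    intro A hA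
    have : ∑ B ∈ (Finset.univ \ C).powerset, (if E (A ∪ B) then w p (A ∪ B) else 0)
        = ∑ B ∈ (Finset.univ \ C).powerset,
            (if E A then pw p C A else 0) * pw p (Finset.univ \ C) B := by
      apply Finset.sum_congr rfl
      intro B hB
      have hk := key A B (Finset.mem_powerset.mp hA) (Finset.mem_powerset.mp hB)
      rw [wfac A hA B hB]
      by_cases hEA : E A <;> simp [hk.1, hEA]
    rw [this, ← Finset.mul_sum, sum_pw, mul_one]
  have F_eq : ∑ A ∈ C.powerset, ∑ B ∈ (Finset.univ \ C).powerset,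
        (if F (A ∪ B) then w p (A ∪ B) else 0)
      = ∑ B ∈ (Finset.univ \ C).powerset, (if F B then pw p (Finset.univ \ C) B else 0) := by
    have : ∀ A ∈ C.powerset, ∑ B ∈ (Finset.univ \ C).powerset,
        (if F (A ∪ B) then w p (A ∪ B) else 0)
        = pw p C A * ∑ B ∈ (Finset.univ \ C).powerset,
            (if F B then pw p (Finset.univ \ C) B else 0) := by
      intro A hA
      rw [Finset.mul_sum]
      apply Finset.sum_congr rfl
      intro B hB
      have hk := key A B (Finset.mem_powerset.mp hA) (Finset.mem_powerset.mp hB)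
      rw [wfac A hA B hB]
      by_cases hFB : F B <;> simp [hk.2, hFB]
    rw [Finset.sum_congr rfl this, ← Finset.sum_mul, sum_pw, one_mul]
  rw [expand (fun U => E U ∧ F U), expand E, expand F, E_eq, F_eq]
  refine Eq.trans ?_ lhs_eq
  apply Finset.sum_congr rfl; intro A _
  apply Finset.sum_congr rfl; intro B _
  congr 1


lemma Pr_congr {p : ℝ} {E F : Finset V → Prop} (h : ∀ U, E U ↔ F U) : Pr p E = Pr p F := by
  unfold Pr
  apply Finset.sum_congr rfl
  intro U _
  by_cases hE : E U
  · rw [if_pos hE, if_pos ((h U).mp hE)]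
  · rw [if_neg hE, if_neg (fun hF => hE ((h U).mpr hF))]

open Classical in
/-- union bound style inequality -/
lemma Pr_le_add_sum {p : ℝ} (hp0 : 0 ≤ p) (hp1 : p ≤ 1)
    {E F : Finset V → Prop} {T : Finset V} {G : V → Finset V → Prop}
    (h : ∀ U, E U → F U ∨ ∃ j ∈ T, G j U) :
    Pr p E ≤ Pr p F + ∑ j ∈ T, Pr p (G j) := by
  unfold Pr
  rw [Finset.sum_comm]
  rw [← Finset.sum_add_distrib]
  apply Finset.sum_le_sum
  intro U _
  by_cases hE : E U
  · rw [if_pos hE]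
    rcases h U hE with hF | ⟨j₀, hj₀, hG⟩
    · rw [if_pos hF]
      have : (0:ℝ) ≤ ∑ j ∈ T, if G j U then w p U else 0 := by
        apply Finset.sum_nonneg
        intro j _
        split
        · exact w_nonneg hp0 hp1 U
        · exact le_refl _
      linarith [w_nonneg hp0 hp1 U]
    · have h1 : w p U ≤ ∑ j ∈ T, if G j U then w p U else 0 := by
        have := Finset.single_le_sum (f := fun j => if G j U then w p U else 0)
          (fun j _ => by show 0 ≤ (if G j U then w p U else 0); split; exacts [w_nonneg hp0 hp1 U, le_refl _]) hj₀
        simp only [if_pos hG] at this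
        exact this
      have h2 : (0:ℝ) ≤ if F U then w p U else 0 := by
        split; exacts [w_nonneg hp0 hp1 U, le_refl _]
      linarith
  · rw [if_neg hE]
    apply add_nonneg
    · split; exacts [w_nonneg hp0 hp1 U, le_refl _]
    · apply Finset.sum_nonneg
      intro j _
      split; exacts [w_nonneg hp0 hp1 U, le_refl _]

section LLL

variable {p : ℝ} {A : V → Finset V → Prop} {N : V → Finset V} {q : ℝ} {D : ℕ}

/-- the conjunction of complements of events is determined by the union of their supports -/
lemma Det_conj (hdet : ∀ v, Det (A v) (N v)) (T : Finset V) :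
    Det (fun U => ∀ j ∈ T, ¬ A j U) (T.biUnion N) := by
  intro U
  have : ∀ j ∈ T, (A j U ↔ A j (U ∩ T.biUnion N)) := by
    intro j hj
    have hsub : N j ⊆ T.biUnion N := fun a ha => Finset.mem_biUnion.mpr ⟨j, hj, ha⟩
    have h1 : U ∩ N j = (U ∩ T.biUnion N) ∩ N j := by
      rw [Finset.inter_assoc, Finset.inter_eq_right.mpr hsub]
    rw [hdet j U, h1, ← hdet j (U ∩ T.biUnion N)]
  constructor
  · intro h j hj haj
    exact h j hj (((this j hj)).mpr haj)
  · intro h j hj haj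
    exact h j hj (((this j hj)).mp haj)

/-- The main LLL induction. -/
lemma LLL_claim (hp0 : 0 ≤ p) (hp1 : p ≤ 1)
    (hdet : ∀ v, Det (A v) (N v)) (hq : ∀ v, Pr p (A v) ≤ q) (hq0 : 0 ≤ q)
    (hD : ∀ v, (Finset.univ.filter (fun u => ¬ Disjoint (N u) (N v))).card ≤ D)
    (hcond : 4 * q * D ≤ 1) :
    ∀ n (S : Finset V), S.card ≤ n → ∀ i,
      Pr p (fun U => A i U ∧ ∀ j ∈ S, ¬ A j U) ≤
        2 * q * Pr p (fun U => ∀ j ∈ S, ¬ A j U) := by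
  intro n
  induction n with
  | zero =>
    intro S hS i
    have hSempty : S = ∅ := Finset.card_eq_zero.mp (Nat.le_zero.mp hS)
    subst hSempty
    have h1 : Pr p (fun U => A i U ∧ ∀ j ∈ (∅ : Finset V), ¬ A j U) ≤ Pr p (A i) :=
      Pr_mono hp0 hp1 (fun U h => h.1)
    have h2 : Pr p (fun U => ∀ j ∈ (∅ : Finset V), ¬ A j U) = 1 := by
      rw [Pr_congr (F := fun _ => True) (fun U => by simp)]
      exact Pr_true p
    rw [h2, mul_one]
    calc Pr p (fun U => A i U ∧ ∀ j ∈ (∅ : Finset V), ¬ A j U) ≤ Pr p (A i) := h1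
      _ ≤ q := hq i
      _ ≤ 2 * q := by linarith
  | succ n ih =>
    intro S hS i
    set Γ : Finset V := Finset.univ.filter (fun u => ¬ Disjoint (N u) (N i)) with hΓ
    set S₁ : Finset V := S ∩ Γ with hS₁
    set S₂ : Finset V := S \ Γ with hS₂def
    -- facts about S₂
    have hS₂disj : ∀ j ∈ S₂, Disjoint (N j) (N i) := by
      intro j hj
      have := (Finset.mem_sdiff.mp hj).2
      by_contra hnd
      exact this (Finset.mem_filter.mpr ⟨Finset.mem_univ j, hnd⟩)
    have hS₂sub : S₂ ⊆ S := Finset.sdiff_subset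
    -- independence
    have hdet2 : Det (fun U => ∀ j ∈ S₂, ¬ A j U) (S₂.biUnion N) := Det_conj hdet S₂
    have hdisj : Disjoint (N i) (S₂.biUnion N) := by
      rw [Finset.disjoint_biUnion_right]
      intro j hj
      exact (hS₂disj j hj).symm
    have hindep : Pr p (fun U => A i U ∧ ∀ j ∈ S₂, ¬ A j U)
        = Pr p (A i) * Pr p (fun U => ∀ j ∈ S₂, ¬ A j U) :=
      Pr_indep (hdet i) hdet2 hdisj
    have hP2nonneg : 0 ≤ Pr p (fun U => ∀ j ∈ S₂, ¬ A j U) := Pr_nonneg hp0 hp1 _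
    have hPSnonneg : 0 ≤ Pr p (fun U => ∀ j ∈ S, ¬ A j U) := Pr_nonneg hp0 hp1 _
    have step1 : Pr p (fun U => A i U ∧ ∀ j ∈ S, ¬ A j U)
        ≤ q * Pr p (fun U => ∀ j ∈ S₂, ¬ A j U) := by
      calc Pr p (fun U => A i U ∧ ∀ j ∈ S, ¬ A j U)
          ≤ Pr p (fun U => A i U ∧ ∀ j ∈ S₂, ¬ A j U) :=
            Pr_mono hp0 hp1 (fun U h => ⟨h.1, fun j hj => h.2 j (hS₂sub hj)⟩)
        _ = Pr p (A i) * Pr p (fun U => ∀ j ∈ S₂, ¬ A j U) := hindep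
        _ ≤ q * Pr p (fun U => ∀ j ∈ S₂, ¬ A j U) :=
            mul_le_mul_of_nonneg_right (hq i) hP2nonneg
    by_cases hS₁e : S₁ = ∅
    · have hSeq : S₂ = S := by
        rw [hS₂def, Finset.sdiff_eq_self_iff_disjoint]
        rw [Finset.disjoint_iff_inter_eq_empty]
        rwa [hS₁] at hS₁e
      rw [hSeq] at step1
      calc Pr p (fun U => A i U ∧ ∀ j ∈ S, ¬ A j U)
          ≤ q * Pr p (fun U => ∀ j ∈ S, ¬ A j U) := step1
        _ ≤ 2 * q * Pr p (fun U => ∀ j ∈ S, ¬ A j U) := by nlinarith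
    · -- S₁ nonempty, use IH
      have hcard2 : S₂.card ≤ n := by
        have h1 : S₂.card + S₁.card = S.card := by
          rw [hS₂def, hS₁]
          exact Finset.card_sdiff_add_card_inter S Γ
        have h2 : 1 ≤ S₁.card := Finset.card_pos.mpr (Finset.nonempty_iff_ne_empty.mpr hS₁e)
        omega
      -- union bound
      have hub : Pr p (fun U => ∀ j ∈ S₂, ¬ A j U)
          ≤ Pr p (fun U => ∀ j ∈ S, ¬ A j U)
            + ∑ j ∈ S₁, Pr p (fun U => A j U ∧ ∀ k ∈ S₂, ¬ A k U) := by
        apply Pr_le_add_sum hp0 hp1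
        intro U hU
        by_cases hall : ∀ j ∈ S, ¬ A j U
        · exact Or.inl hall
        · right
          push_neg at hall
          obtain ⟨j, hjS, hjA⟩ := hall
          refine ⟨j, ?_, hjA, hU⟩
          rw [hS₁, Finset.mem_inter]
          refine ⟨hjS, ?_⟩
          by_contra hjΓ
          have hjS₂ : j ∈ S₂ := Finset.mem_sdiff.mpr ⟨hjS, hjΓ⟩
          exact hU j hjS₂ hjA
      have hterms : ∀ j ∈ S₁, Pr p (fun U => A j U ∧ ∀ k ∈ S₂, ¬ A k U)
          ≤ 2 * q * Pr p (fun U => ∀ k ∈ S₂, ¬ A k U) := fun j _ => ih S₂ hcard2 j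
      have hsum : ∑ j ∈ S₁, Pr p (fun U => A j U ∧ ∀ k ∈ S₂, ¬ A k U)
          ≤ S₁.card * (2 * q * Pr p (fun U => ∀ k ∈ S₂, ¬ A k U)) := by
        calc ∑ j ∈ S₁, Pr p (fun U => A j U ∧ ∀ k ∈ S₂, ¬ A k U)
            ≤ ∑ _j ∈ S₁, 2 * q * Pr p (fun U => ∀ k ∈ S₂, ¬ A k U) :=
              Finset.sum_le_sum hterms
          _ = S₁.card * (2 * q * Pr p (fun U => ∀ k ∈ S₂, ¬ A k U)) := by
              rw [Finset.sum_const, nsmul_eq_mul]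
      have hcardS₁ : (S₁.card : ℝ) ≤ D := by
        have : S₁.card ≤ D := le_trans (Finset.card_le_card (by rw [hS₁]; exact Finset.inter_subset_right)) (hD i)
        exact_mod_cast this
      -- conclude P2 ≤ 2 PS
      have hP2le : Pr p (fun U => ∀ j ∈ S₂, ¬ A j U)
          ≤ 2 * Pr p (fun U => ∀ j ∈ S, ¬ A j U) := by
        have h3 : (S₁.card : ℝ) * (2 * q * Pr p (fun U => ∀ k ∈ S₂, ¬ A k U))
            ≤ (1/2) * Pr p (fun U => ∀ k ∈ S₂, ¬ A k U) := by
          have hDq : (S₁.card : ℝ) * (2 * q) ≤ 1/2 := by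
            have hD0 : (0:ℝ) ≤ (D:ℝ) := Nat.cast_nonneg D
            nlinarith
          nlinarith
        linarith [hub, hsum]
      calc Pr p (fun U => A i U ∧ ∀ j ∈ S, ¬ A j U)
          ≤ q * Pr p (fun U => ∀ j ∈ S₂, ¬ A j U) := step1
        _ ≤ q * (2 * Pr p (fun U => ∀ j ∈ S, ¬ A j U)) :=
            mul_le_mul_of_nonneg_left hP2le hq0
        _ = 2 * q * Pr p (fun U => ∀ j ∈ S, ¬ A j U) := by ring

/-- positivity of avoiding all events -/
lemma LLL_pos (hp0 : 0 ≤ p) (hp1 : p ≤ 1)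
    (hdet : ∀ v, Det (A v) (N v)) (hq : ∀ v, Pr p (A v) ≤ q) (hq0 : 0 ≤ q) (hq4 : q ≤ 1/4)
    (hD : ∀ v, (Finset.univ.filter (fun u => ¬ Disjoint (N u) (N v))).card ≤ D)
    (hcond : 4 * q * D ≤ 1) :
    0 < Pr p (fun U => ∀ v : V, ¬ A v U) := by
  have claim := LLL_claim hp0 hp1 hdet hq hq0 hD hcond
  have main : ∀ S : Finset V, (1 - 2*q) ^ S.card ≤ Pr p (fun U => ∀ j ∈ S, ¬ A j U) := by
    intro S
    induction S using Finset.induction_on with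
    | empty =>
      rw [Finset.card_empty, pow_zero]
      rw [Pr_congr (F := fun _ => True) (fun U => by simp)]
      rw [Pr_true]
    | @insert i S hiS ihS =>
      have hsplit := Pr_split p (fun U => ∀ j ∈ S, ¬ A j U) (A i)
      have hcomm : Pr p (fun U => (∀ j ∈ S, ¬ A j U) ∧ A i U)
          = Pr p (fun U => A i U ∧ ∀ j ∈ S, ¬ A j U) := Pr_congr (fun U => and_comm)
      have hins : Pr p (fun U => ∀ j ∈ insert i S, ¬ A j U)
          = Pr p (fun U => (∀ j ∈ S, ¬ A j U) ∧ ¬ A i U) := by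
        apply Pr_congr
        intro U
        simp only [Finset.mem_insert]
        constructor
        · intro h
          exact ⟨fun j hj => h j (Or.inr hj), h i (Or.inl rfl)⟩
        · rintro ⟨h1, h2⟩ j (rfl | hj)
          · exact h2
          · exact h1 j hj
      have hclaim := claim S.card S (le_refl _) i
      have hcard : (insert i S).card = S.card + 1 := Finset.card_insert_of_notMem hiS
      rw [hins, hcard]
      have : Pr p (fun U => (∀ j ∈ S, ¬ A j U) ∧ ¬ A i U)
          = Pr p (fun U => ∀ j ∈ S, ¬ A j U)
            - Pr p (fun U => A i U ∧ ∀ j ∈ S, ¬ A j U) := by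
        rw [hsplit, hcomm]; ring
      rw [this]
      have hPS := Pr_nonneg (E := fun U => ∀ j ∈ S, ¬ A j U) hp0 hp1
      calc (1 - 2*q) ^ (S.card + 1) = (1 - 2*q) * (1 - 2*q) ^ S.card := by ring
        _ ≤ (1 - 2*q) * Pr p (fun U => ∀ j ∈ S, ¬ A j U) := by
            apply mul_le_mul_of_nonneg_left ihS (by linarith)
        _ ≤ Pr p (fun U => ∀ j ∈ S, ¬ A j U)
            - Pr p (fun U => A i U ∧ ∀ j ∈ S, ¬ A j U) := by
            have := hclaim
            nlinarith
  have huniv := main Finset.univ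
  have hpow : (0:ℝ) < (1 - 2*q) ^ (Finset.univ : Finset V).card := by
    apply pow_pos; linarith
  calc (0:ℝ) < (1 - 2*q) ^ (Finset.univ : Finset V).card := hpow
    _ ≤ Pr p (fun U => ∀ j ∈ Finset.univ, ¬ A j U) := huniv
    _ = Pr p (fun U => ∀ v : V, ¬ A v U) := Pr_congr (fun U => by simp)

open Classical in
lemma exists_of_Pr_pos {p : ℝ} {E : Finset V → Prop} (h : 0 < Pr p E) : ∃ U, E U := by
  by_contra hno
  push_neg at hno
  have : Pr p E = 0 := by
    unfold Pr
    apply Finset.sum_eq_zero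
    intro U _
    rw [if_neg (hno U)]
  rw [this] at h
  exact lt_irrefl 0 h

end LLL


open Classical in
/-- two-event union bound -/
lemma Pr_le_add {p : ℝ} (hp0 : 0 ≤ p) (hp1 : p ≤ 1) {E F G : Finset V → Prop}
    (h : ∀ U, E U → F U ∨ G U) : Pr p E ≤ Pr p F + Pr p G := by
  unfold Pr
  rw [← Finset.sum_add_distrib]
  apply Finset.sum_le_sum
  intro U _
  have hw := w_nonneg (A := U) hp0 hp1
  by_cases hE : E U
  · rw [if_pos hE]
    rcases h U hE with hF | hG
    · rw [if_pos hF]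
      have : (0:ℝ) ≤ if G U then w p U else 0 := by split; exacts [hw, le_refl _]
      linarith
    · rw [if_pos hG]
      have : (0:ℝ) ≤ if F U then w p U else 0 := by split; exacts [hw, le_refl _]
      linarith
  · rw [if_neg hE]
    apply add_nonneg <;> (split; exacts [hw, le_refl _])

open Classical in
/-- marginalization to the coordinates determining an event -/
lemma Pr_marginal {p : ℝ} {E : Finset V → Prop} {C : Finset V} (hE : Det E C) :
    Pr p E = ∑ T ∈ C.powerset, (if E T then pw p C T else 0) := by
  have expand : Pr p E = ∑ A ∈ C.powerset, ∑ B ∈ (Finset.univ \ C).powerset,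
      (if E (A ∪ B) then w p (A ∪ B) else 0) := by
    unfold Pr
    exact sum_split C _
  rw [expand]
  apply Finset.sum_congr rfl
  intro A hA
  have hAC : A ⊆ C := Finset.mem_powerset.mp hA
  have key : ∀ B ∈ (Finset.univ \ C).powerset, (E (A ∪ B) ↔ E A) := by
    intro B hB
    have h1 : (A ∪ B) ∩ C = A := by
      simpa using (union_eq_left_of_mem_powersets (x := (A, B)) hAC
        (Finset.mem_powerset.mp hB)).1
    rw [hE (A ∪ B), h1]
  have : ∑ B ∈ (Finset.univ \ C).powerset, (if E (A ∪ B) then w p (A ∪ B) else 0)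
      = ∑ B ∈ (Finset.univ \ C).powerset,
          (if E A then pw p C A else 0) * pw p (Finset.univ \ C) B := by
    apply Finset.sum_congr rfl
    intro B hB
    rw [w_factor hAC (Finset.mem_powerset.mp hB) p]
    by_cases hEA : E A <;> simp [key B hB, hEA]
  rw [this, ← Finset.mul_sum, sum_pw, mul_one]

omit [Fintype V] in
lemma mgf_eq (p x : ℝ) (C : Finset V) :
    ∑ T ∈ C.powerset, x ^ T.card * pw p C T = (p * x + (1-p)) ^ C.card := by
  rw [← sum_pow_gen (p*x) (1-p) C]
  apply Finset.sum_congr rfl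
  intro T _
  simp only [pw, mul_pow]
  ring

lemma det_card_event (C : Finset V) (Q : ℕ → Prop) :
    Det (fun U => Q (U ∩ C).card) C := by
  intro U
  simp only []
  rw [Finset.inter_assoc, Finset.inter_self]

open Classical in
lemma tail_up {p t a : ℝ} (hp0 : 0 ≤ p) (hp1 : p ≤ 1) (ht : 0 ≤ t) (C : Finset V) :
    Pr p (fun U => a ≤ ((U ∩ C).card : ℝ))
      ≤ Real.exp (-(t*a)) * (p * Real.exp t + (1-p)) ^ C.card := by
  rw [Pr_marginal (det_card_event C (fun k => a ≤ (k:ℝ)))]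
  have step : ∀ T ∈ C.powerset, (if a ≤ ((T ∩ C).card : ℝ) then pw p C T else 0)
      ≤ Real.exp (-(t*a)) * ((Real.exp t) ^ T.card * pw p C T) := by
    intro T hT
    have hTC : T ∩ C = T := Finset.inter_eq_left.mpr (Finset.mem_powerset.mp hT)
    have hpw := pw_nonneg hp0 hp1 C T
    rw [hTC]
    by_cases hcase : a ≤ ((T.card : ℕ) : ℝ)
    · rw [if_pos hcase]
      have h1 : (1:ℝ) ≤ Real.exp (-(t*a)) * (Real.exp t) ^ T.card := by
        rw [← Real.exp_nat_mul, ← Real.exp_add]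
        rw [show (-(t*a) + T.card * t) = t * (T.card - a) by ring]
        apply Real.one_le_exp
        have : (0:ℝ) ≤ (T.card : ℝ) - a := by linarith
        positivity
      calc pw p C T = 1 * pw p C T := (one_mul _).symm
        _ ≤ (Real.exp (-(t*a)) * (Real.exp t) ^ T.card) * pw p C T :=
            mul_le_mul_of_nonneg_right h1 hpw
        _ = Real.exp (-(t*a)) * ((Real.exp t) ^ T.card * pw p C T) := by ring
    · rw [if_neg hcase]
      positivity
  calc ∑ T ∈ C.powerset, (if a ≤ ((T ∩ C).card : ℝ) then pw p C T else 0)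
      ≤ ∑ T ∈ C.powerset, Real.exp (-(t*a)) * ((Real.exp t) ^ T.card * pw p C T) :=
        Finset.sum_le_sum step
    _ = Real.exp (-(t*a)) * ∑ T ∈ C.powerset, (Real.exp t) ^ T.card * pw p C T := by
        rw [Finset.mul_sum]
    _ = Real.exp (-(t*a)) * (p * Real.exp t + (1-p)) ^ C.card := by
        rw [mgf_eq]

open Classical in
lemma tail_low {p t a : ℝ} (hp0 : 0 ≤ p) (hp1 : p ≤ 1) (ht : 0 ≤ t) (C : Finset V) :
    Pr p (fun U => ((U ∩ C).card : ℝ) ≤ a)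
      ≤ Real.exp (t*a) * (p * Real.exp (-t) + (1-p)) ^ C.card := by
  rw [Pr_marginal (det_card_event C (fun k => (k:ℝ) ≤ a))]
  have step : ∀ T ∈ C.powerset, (if ((T ∩ C).card : ℝ) ≤ a then pw p C T else 0)
      ≤ Real.exp (t*a) * ((Real.exp (-t)) ^ T.card * pw p C T) := by
    intro T hT
    have hTC : T ∩ C = T := Finset.inter_eq_left.mpr (Finset.mem_powerset.mp hT)
    have hpw := pw_nonneg hp0 hp1 C T
    rw [hTC]
    by_cases hcase : ((T.card : ℕ) : ℝ) ≤ a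
    · rw [if_pos hcase]
      have h1 : (1:ℝ) ≤ Real.exp (t*a) * (Real.exp (-t)) ^ T.card := by
        rw [← Real.exp_nat_mul, ← Real.exp_add]
        rw [show (t*a + T.card * (-t)) = t * (a - T.card) by ring]
        apply Real.one_le_exp
        have : (0:ℝ) ≤ a - (T.card : ℝ) := by linarith
        positivity
      calc pw p C T = 1 * pw p C T := (one_mul _).symm
        _ ≤ (Real.exp (t*a) * (Real.exp (-t)) ^ T.card) * pw p C T :=
            mul_le_mul_of_nonneg_right h1 hpw
        _ = Real.exp (t*a) * ((Real.exp (-t)) ^ T.card * pw p C T) := by ring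
    · rw [if_neg hcase]
      positivity
  calc ∑ T ∈ C.powerset, (if ((T ∩ C).card : ℝ) ≤ a then pw p C T else 0)
      ≤ ∑ T ∈ C.powerset, Real.exp (t*a) * ((Real.exp (-t)) ^ T.card * pw p C T) :=
        Finset.sum_le_sum step
    _ = Real.exp (t*a) * ∑ T ∈ C.powerset, (Real.exp (-t)) ^ T.card * pw p C T := by
        rw [Finset.mul_sum]
    _ = Real.exp (t*a) * (p * Real.exp (-t) + (1-p)) ^ C.card := by
        rw [mgf_eq]

lemma exp_le_quad {x : ℝ} (hx : |x| ≤ 1) : Real.exp x ≤ 1 + x + x^2 := by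
  have h := Real.exp_bound hx (n := 2) (by norm_num)
  have hsum : ∑ m ∈ Finset.range 2, x^m / (Nat.factorial m) = 1 + x := by
    simp [Finset.sum_range_succ]
  rw [hsum] at h
  have h2 := (abs_sub_le_iff.mp h).1
  have h3 : |x|^2 = x^2 := sq_abs x
  have h4 : |x| ^ 2 * ((2:ℕ).succ / ((Nat.factorial 2 : ℕ) * (2:ℕ))) ≤ x^2 := by
    rw [h3]
    norm_num [Nat.factorial]
    nlinarith [sq_nonneg x]
  linarith


lemma chernoff (C : Finset V) :
    Pr (1e-4 : ℝ) (fun U =>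
        ¬ (|((U ∩ C).card : ℝ) - 1e-4 * (C.card : ℝ)| ≤ 1e-6 * (C.card : ℝ)))
      ≤ 2 * Real.exp (-(2.5e-9) * (C.card : ℝ)) := by
  have hp0 : (0:ℝ) ≤ 1e-4 := by norm_num
  have hp1 : (1e-4:ℝ) ≤ 1 := by norm_num
  set d : ℝ := (C.card : ℝ) with hd
  have hd0 : (0:ℝ) ≤ d := Nat.cast_nonneg _
  have himp : ∀ U : Finset V, (¬ (|((U ∩ C).card : ℝ) - 1e-4 * d| ≤ 1e-6 * d)) →
      ((1e-4 + 1e-6) * d ≤ ((U ∩ C).card : ℝ)) ∨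
        (((U ∩ C).card : ℝ) ≤ (1e-4 - 1e-6) * d) := by
    intro U hU
    rw [not_le] at hU
    rcases lt_abs.mp hU with h | h
    · left; linarith
    · right
      rw [neg_sub] at h
      linarith
  refine le_trans (Pr_le_add hp0 hp1 himp) ?_
  have hup := tail_up (p := 1e-4) (t := 1/200) (a := (1e-4 + 1e-6) * d)
    hp0 hp1 (by norm_num) C
  have hlow := tail_low (p := 1e-4) (t := 1/200) (a := (1e-4 - 1e-6) * d)
    hp0 hp1 (by norm_num) C
  have hexp_t : Real.exp (1/200) ≤ 1 + 1/200 + (1/200:ℝ)^2 := by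
    have := exp_le_quad (x := (1/200 : ℝ)) (by rw [abs_of_nonneg] <;> norm_num)
    linarith
  have hexp_mt : Real.exp (-(1/200)) ≤ 1 - 1/200 + (1/200:ℝ)^2 := by
    have := exp_le_quad (x := -(1/200 : ℝ)) (by rw [abs_of_nonpos] <;> norm_num)
    nlinarith
  have hexp_pos := Real.exp_pos (1/200 : ℝ)
  have hexp_mpos := Real.exp_pos (-(1/200) : ℝ)
  -- base bounds
  have hbase_up : (1e-4 * Real.exp (1/200) + (1 - 1e-4))
      ≤ Real.exp (1e-4 * (1/200 + (1/200:ℝ)^2)) := by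
    have h2 := Real.add_one_le_exp (1e-4 * (1/200 + (1/200:ℝ)^2))
    nlinarith
  have hbase_low : (1e-4 * Real.exp (-(1/200)) + (1 - 1e-4))
      ≤ Real.exp (1e-4 * (-(1/200) + (1/200:ℝ)^2)) := by
    have h2 := Real.add_one_le_exp (1e-4 * (-(1/200) + (1/200:ℝ)^2))
    nlinarith
  have hbase_up0 : (0:ℝ) ≤ 1e-4 * Real.exp (1/200) + (1 - 1e-4) := by nlinarith
  have hbase_low0 : (0:ℝ) ≤ 1e-4 * Real.exp (-(1/200)) + (1 - 1e-4) := by nlinarith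
  -- pow bounds
  have hpow_up : (1e-4 * Real.exp (1/200) + (1 - 1e-4)) ^ C.card
      ≤ Real.exp ((C.card : ℝ) * (1e-4 * (1/200 + (1/200:ℝ)^2))) := by
    calc (1e-4 * Real.exp (1/200) + (1 - 1e-4)) ^ C.card
        ≤ (Real.exp (1e-4 * (1/200 + (1/200:ℝ)^2))) ^ C.card :=
          pow_le_pow_left₀ hbase_up0 hbase_up C.card
      _ = Real.exp ((C.card : ℝ) * (1e-4 * (1/200 + (1/200:ℝ)^2))) := by
          rw [← Real.exp_nat_mul]
  have hpow_low : (1e-4 * Real.exp (-(1/200)) + (1 - 1e-4)) ^ C.card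
      ≤ Real.exp ((C.card : ℝ) * (1e-4 * (-(1/200) + (1/200:ℝ)^2))) := by
    calc (1e-4 * Real.exp (-(1/200)) + (1 - 1e-4)) ^ C.card
        ≤ (Real.exp (1e-4 * (-(1/200) + (1/200:ℝ)^2))) ^ C.card :=
          pow_le_pow_left₀ hbase_low0 hbase_low C.card
      _ = Real.exp ((C.card : ℝ) * (1e-4 * (-(1/200) + (1/200:ℝ)^2))) := by
          rw [← Real.exp_nat_mul]
  have hup2 : Pr (1e-4 : ℝ) (fun U => (1e-4 + 1e-6) * d ≤ ((U ∩ C).card : ℝ))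
      ≤ Real.exp (-(2.5e-9) * d) := by
    refine le_trans hup ?_
    calc Real.exp (-(1/200 * ((1e-4 + 1e-6) * d)))
          * (1e-4 * Real.exp (1/200) + (1 - 1e-4)) ^ C.card
        ≤ Real.exp (-(1/200 * ((1e-4 + 1e-6) * d)))
          * Real.exp (d * (1e-4 * (1/200 + (1/200:ℝ)^2))) :=
          mul_le_mul_of_nonneg_left hpow_up (le_of_lt (Real.exp_pos _))
      _ = Real.exp (-(1/200 * ((1e-4 + 1e-6) * d)) + d * (1e-4 * (1/200 + (1/200:ℝ)^2))) := by
          rw [← Real.exp_add]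
      _ = Real.exp (-(2.5e-9) * d) := by
          congr 1
          ring
  have hlow2 : Pr (1e-4 : ℝ) (fun U => ((U ∩ C).card : ℝ) ≤ (1e-4 - 1e-6) * d)
      ≤ Real.exp (-(2.5e-9) * d) := by
    refine le_trans hlow ?_
    calc Real.exp (1/200 * ((1e-4 - 1e-6) * d))
          * (1e-4 * Real.exp (-(1/200)) + (1 - 1e-4)) ^ C.card
        ≤ Real.exp (1/200 * ((1e-4 - 1e-6) * d))
          * Real.exp (d * (1e-4 * (-(1/200) + (1/200:ℝ)^2))) :=
          mul_le_mul_of_nonneg_left hpow_low (le_of_lt (Real.exp_pos _))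
      _ = Real.exp (1/200 * ((1e-4 - 1e-6) * d) + d * (1e-4 * (-(1/200) + (1/200:ℝ)^2))) := by
          rw [← Real.exp_add]
      _ = Real.exp (-(2.5e-9) * d) := by
          congr 1
          ring
  linarith

end LLLwork




/-- Number of neighbours of `v` that lie in the vertex set `A`. -/
def dIn {V : Type} [Fintype V] [DecidableEq V] (G : SimpleGraph V) [DecidableRel G.Adj]
    (A : Finset V) (v : V) : ℕ :=
  (G.neighborFinset v ∩ A).card

/-- There exists `Δ₀` such that every finite simple graph with maximum degree
`Δ ≥ Δ₀` and minimum degree `δ ≥ 10^20 * ln Δ` contains a set `U ⊆ V` with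
`|d_U(v) − 10⁻⁴ d(v)| ≤ 10⁻⁶ d(v)` for every vertex `v`. -/
theorem statement1 :
    ∃ Δ₀ : ℕ, ∀ (V : Type) [Fintype V] [DecidableEq V]
      (G : SimpleGraph V) [DecidableRel G.Adj],
      Δ₀ ≤ G.maxDegree →
      (1e20 : ℝ) * Real.log G.maxDegree ≤ (G.minDegree : ℝ) →
      ∃ U : Finset V, ∀ v : V,
        |(dIn G U v : ℝ) - 1e-4 * G.degree v| ≤ 1e-6 * G.degree v := by
  refine ⟨2, ?_⟩
  intro V _ _ G _ hΔ hδ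
  classical
  set Δ : ℕ := G.maxDegree with hΔdef
  set L : ℝ := Real.log Δ with hLdef
  set N : V → Finset V := fun v => G.neighborFinset v with hNdef
  set A : V → Finset V → Prop := fun v U =>
    ¬ (|((U ∩ N v).card : ℝ) - 1e-4 * ((N v).card : ℝ)| ≤ 1e-6 * ((N v).card : ℝ)) with hAdef
  set q : ℝ := 2 * Real.exp (-(2.5e-9) * (G.minDegree : ℝ)) with hqdef
  have hdet : ∀ v, LLLwork.Det (A v) (N v) := by
    intro v
    exact LLLwork.det_card_event (N v)
      (fun k => ¬ (|(k : ℝ) - 1e-4 * ((N v).card : ℝ)| ≤ 1e-6 * ((N v).card : ℝ)))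
  have hq : ∀ v, LLLwork.Pr (1e-4 : ℝ) (A v) ≤ q := by
    intro v
    refine le_trans (LLLwork.chernoff (N v)) ?_
    have h1 : (G.minDegree : ℝ) ≤ ((N v).card : ℝ) := by
      have h2 := G.minDegree_le_degree v
      have hcard : (N v).card = G.degree v := G.card_neighborFinset_eq_degree v
      rw [hcard]
      exact_mod_cast h2
    have h3 : -(2.5e-9) * ((N v).card : ℝ) ≤ -(2.5e-9) * (G.minDegree : ℝ) := by nlinarith
    have h4 := Real.exp_le_exp.mpr h3
    rw [hqdef]
    linarith
  have hD : ∀ v, (Finset.univ.filter (fun u => ¬ Disjoint (N u) (N v))).card ≤ Δ^2 := by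
    intro v
    have hsub : Finset.univ.filter (fun u => ¬ Disjoint (N u) (N v)) ⊆ (N v).biUnion N := by
      intro u hu
      have h2 := (Finset.mem_filter.mp hu).2
      obtain ⟨a, haU, haV⟩ := Finset.not_disjoint_iff.mp h2
      apply Finset.mem_biUnion.mpr
      refine ⟨a, haV, ?_⟩
      have : G.Adj u a := by
        rw [hNdef] at haU
        exact (SimpleGraph.mem_neighborFinset G u a).mp haU
      rw [hNdef]
      exact (SimpleGraph.mem_neighborFinset G a u).mpr this.symm
    calc (Finset.univ.filter (fun u => ¬ Disjoint (N u) (N v))).card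
        ≤ ((N v).biUnion N).card := Finset.card_le_card hsub
      _ ≤ ∑ a ∈ N v, (N a).card := Finset.card_biUnion_le
      _ ≤ ∑ _a ∈ N v, Δ := by
          apply Finset.sum_le_sum
          intro a _
          rw [hNdef]
          rw [G.card_neighborFinset_eq_degree a]
          exact G.degree_le_maxDegree a
      _ = (N v).card * Δ := by rw [Finset.sum_const, smul_eq_mul]
      _ ≤ Δ * Δ := by
          apply Nat.mul_le_mul_right
          rw [hNdef, G.card_neighborFinset_eq_degree v]
          exact G.degree_le_maxDegree v
      _ = Δ^2 := (sq Δ).symm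
  -- numeric facts
  have hΔ2 : 2 ≤ Δ := hΔ
  have hΔpos : (0:ℝ) < (Δ : ℝ) := by
    have : 0 < Δ := by omega
    exact_mod_cast this
  have hL2 : Real.log 2 ≤ L := by
    rw [hLdef]
    apply Real.log_le_log (by norm_num)
    exact_mod_cast hΔ2
  have hlog2 : (0.69:ℝ) < Real.log 2 := by
    have := Real.log_two_gt_d9
    linarith
  have hL69 : (0.69:ℝ) ≤ L := by linarith
  have hqbound : q ≤ 2 * Real.exp (-(2.5e11) * L) := by
    have h1 : -(2.5e-9) * (G.minDegree : ℝ) ≤ -(2.5e11) * L := by nlinarith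
    have h2 := Real.exp_le_exp.mpr h1
    rw [hqdef]
    linarith
  have hexp3 : Real.exp (-(3:ℝ)) ≤ 1/8 := by
    have he1 : (2.7:ℝ) < Real.exp 1 := by
      have := Real.exp_one_gt_d9
      linarith
    have h3 : Real.exp (3:ℝ) = Real.exp 1 ^ (3:ℕ) := by
      rw [← Real.exp_nat_mul]
      norm_num
    have h8 : (8:ℝ) ≤ Real.exp 3 := by
      rw [h3]
      have h2e : (2:ℝ) ≤ Real.exp 1 := by linarith
      calc (8:ℝ) = 2^(3:ℕ) := by norm_num
        _ ≤ Real.exp 1 ^ (3:ℕ) := pow_le_pow_left₀ (by norm_num) h2e 3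
    rw [Real.exp_neg]
    have := inv_anti₀ (by norm_num : (0:ℝ) < 8) h8
    linarith
  have hq0 : 0 ≤ q := by rw [hqdef]; positivity
  have hq4 : q ≤ 1/4 := by
    have hle : -(2.5e11) * L ≤ -3 := by nlinarith
    have h2 := Real.exp_le_exp.mpr hle
    have h3 := le_trans h2 hexp3
    linarith
  have hcond : 4 * q * ((Δ^2 : ℕ) : ℝ) ≤ 1 := by
    have hΔexp : (Δ:ℝ) = Real.exp L := by
      rw [hLdef, Real.exp_log hΔpos]
    have hcast : ((Δ^2 : ℕ) : ℝ) = Real.exp L ^ 2 := by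
      push_cast
      rw [hΔexp]
    rw [hcast]
    have hsq : Real.exp L ^ 2 = Real.exp (2 * L) := by
      rw [← Real.exp_nat_mul]
      norm_num
    rw [hsq]
    have hexp_pos1 := Real.exp_pos (2 * L)
    have hexp_pos2 := Real.exp_pos (-(2.5e11) * L)
    have step1 : 4 * q * Real.exp (2*L) ≤ 8 * (Real.exp (-(2.5e11) * L) * Real.exp (2*L)) := by
      nlinarith
    have step2 : Real.exp (-(2.5e11) * L) * Real.exp (2*L) = Real.exp (-(2.5e11) * L + 2*L) := by
      rw [← Real.exp_add]
    have step3 : -(2.5e11) * L + 2*L ≤ -3 := by nlinarith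
    have step4 := Real.exp_le_exp.mpr step3
    have step5 := le_trans step4 hexp3
    rw [step2] at step1
    linarith
  have hpos := LLLwork.LLL_pos (p := (1e-4:ℝ)) (A := A) (N := N) (q := q) (D := Δ^2)
    (by norm_num) (by norm_num) hdet hq hq0 hq4 hD hcond
  obtain ⟨U, hU⟩ := LLLwork.exists_of_Pr_pos hpos
  refine ⟨U, fun v => ?_⟩
  have hv := not_not.mp (hU v)
  have h1 : dIn G U v = (U ∩ N v).card := by
    rw [dIn, hNdef, Finset.inter_comm]
  have h2 : (N v).card = G.degree v := G.card_neighborFinset_eq_degree v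
  rw [h1, ← h2]
  exact hv
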